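/- In the thresholding bandit problem with threshold τ and mean vector μ with μ_i ≠ τ for all i, the characteristic time satisfies (T*(μ))^{-1} = sup_{w ∈ Δ_K} min_{i ∈ [K]} w_i (μ_i - τ)²/(2σ²), and this equals ( Σ_i 2σ²/(μ_i - τ)² )^{-1}. -/

import Mathlib

/-- Alternatives for the thresholding problem. -/
def AltTh (K : ℕ) (τ : ℝ) (ν : Fin K → ℝ) : Set (Fin K → ℝ) :=
  {l | ({i | τ < l i} : Set (Fin K)) ≠ {i | τ < ν i}}

/-- `Tinv K σ2 Alt μ = (T*(μ))⁻¹`. -/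
noncomputable def Tinv (K : ℕ) (σ2 : ℝ) (Alt : (Fin K → ℝ) → Set (Fin K → ℝ))
    (μ : Fin K → ℝ) : ℝ :=
  sSup {x | ∃ w ∈ stdSimplex ℝ (Fin K), x =
    sInf {y | ∃ l ∈ Alt μ, y = ∑ i, w i * (μ i - l i) ^ 2 / (2 * σ2)}}

section aux
variable {K : ℕ} [NeZero K] {σ2 τ : ℝ} {μ w : Fin K → ℝ}

lemma altmem (i : Fin K) (t : ℝ) (ht : ¬ ((τ < t) ↔ (τ < μ i))) :
    Function.update μ i t ∈ AltTh K τ μ := by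
  intro h
  have h2 := Set.ext_iff.mp h i
  simp only [Set.mem_setOf_eq, Function.update_self] at h2
  exact ht h2

lemma sum_update (i : Fin K) (t : ℝ) :
    ∑ j, w j * (μ j - Function.update μ i t j) ^ 2 / (2 * σ2)
      = w i * (μ i - t) ^ 2 / (2 * σ2) := by
  rw [Finset.sum_eq_single i]
  · simp
  · intro j _ hj
    simp [Function.update_of_ne hj]
  · simp

lemma lowerA (hσ2 : 0 < σ2) (hμ : ∀ i, μ i ≠ τ) (hw : ∀ i, 0 ≤ w i)
    (l : Fin K → ℝ) (hl : l ∈ AltTh K τ μ) :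
    (⨅ i, w i * (μ i - τ) ^ 2 / (2 * σ2)) ≤ ∑ i, w i * (μ i - l i) ^ 2 / (2 * σ2) := by
  obtain ⟨i, hi⟩ : ∃ i, ¬ ((τ < l i) ↔ (τ < μ i)) := by
    by_contra h
    push_neg at h
    exact hl (Set.ext fun i => h i)
  have hsq : (μ i - τ) ^ 2 ≤ (μ i - l i) ^ 2 := by
    by_cases hτ : τ < μ i
    · have h1 : ¬ τ < l i := fun h => hi ⟨fun _ => hτ, fun _ => h⟩
      push_neg at h1
      nlinarith
    · have h1 : τ < l i := by
        by_contra h1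
        exact hi ⟨fun h => absurd h h1, fun h => absurd h hτ⟩
      have h2 : μ i < τ := lt_of_le_of_ne (not_lt.mp hτ) (hμ i)
      nlinarith
  calc (⨅ i, w i * (μ i - τ) ^ 2 / (2 * σ2))
      ≤ w i * (μ i - τ) ^ 2 / (2 * σ2) := ciInf_le (Finite.bddBelow_range _) i
    _ ≤ w i * (μ i - l i) ^ 2 / (2 * σ2) := by
        gcongr
        exact hw i
    _ ≤ ∑ j, w j * (μ j - l j) ^ 2 / (2 * σ2) :=
        Finset.single_le_sum (f := fun j => w j * (μ j - l j) ^ 2 / (2 * σ2))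
          (fun j _ => div_nonneg (mul_nonneg (hw j) (sq_nonneg _)) (by linarith)) (Finset.mem_univ i)

lemma inner_eq (hσ2 : 0 < σ2) (hμ : ∀ i, μ i ≠ τ) (hw : ∀ i, 0 ≤ w i) :
    sInf {y | ∃ l ∈ AltTh K τ μ, y = ∑ i, w i * (μ i - l i) ^ 2 / (2 * σ2)}
      = ⨅ i, w i * (μ i - τ) ^ 2 / (2 * σ2) := by
  set S := {y | ∃ l ∈ AltTh K τ μ, y = ∑ i, w i * (μ i - l i) ^ 2 / (2 * σ2)} with hS
  have hbdd : BddBelow S := by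
    refine ⟨0, ?_⟩
    rintro y ⟨l, _, rfl⟩
    exact Finset.sum_nonneg fun i _ => div_nonneg (mul_nonneg (hw i) (sq_nonneg _)) (by linarith)
  have hmemval : ∀ (i : Fin K) (t : ℝ), ¬ ((τ < t) ↔ (τ < μ i)) →
      w i * (μ i - t) ^ 2 / (2 * σ2) ∈ S := by
    intro i t ht
    exact ⟨Function.update μ i t, altmem i t ht, (sum_update i t).symm⟩
  have hne : S.Nonempty := by
    set i0 : Fin K := Classical.arbitrary (Fin K)
    by_cases h : τ < μ i0
    · exact ⟨_, hmemval i0 τ (by simp [h])⟩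
    · exact ⟨_, hmemval i0 (τ + 1) (by simp [h])⟩
  apply le_antisymm
  · obtain ⟨i0, hi0⟩ := Finite.exists_min (fun i => w i * (μ i - τ) ^ 2 / (2 * σ2))
    have hinf : (⨅ i, w i * (μ i - τ) ^ 2 / (2 * σ2)) = w i0 * (μ i0 - τ) ^ 2 / (2 * σ2) :=
      le_antisymm (ciInf_le (Finite.bddBelow_range _) i0) (le_ciInf hi0)
    rw [hinf]
    by_cases h : τ < μ i0
    · exact csInf_le hbdd (hmemval i0 τ (by simp [h]))
    · rw [Real.sInf_le_iff hbdd hne]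
      intro ε hε
      have hμ0 : μ i0 < τ := lt_of_le_of_ne (not_lt.mp h) (hμ i0)
      set a : ℝ := τ - μ i0 with ha
      have hapos : 0 < a := by simp [ha]; linarith
      have hD : 0 < w i0 * (2 * a + 1) + 1 := by nlinarith [hw i0]
      set δ : ℝ := min 1 (σ2 * ε / (w i0 * (2 * a + 1) + 1)) with hδ
      have hδpos : 0 < δ := lt_min one_pos (by positivity)
      have hδ1 : δ ≤ 1 := min_le_left _ _
      have hδ2 : δ * (w i0 * (2 * a + 1) + 1) ≤ σ2 * ε := by
        have := min_le_right 1 (σ2 * ε / (w i0 * (2 * a + 1) + 1))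
        calc δ * (w i0 * (2 * a + 1) + 1)
            ≤ (σ2 * ε / (w i0 * (2 * a + 1) + 1)) * (w i0 * (2 * a + 1) + 1) := by
              apply mul_le_mul_of_nonneg_right _ hD.le
              simpa [hδ] using this
          _ = σ2 * ε := by field_simp
      refine ⟨_, hmemval i0 (τ + δ) (by simp [h]; linarith), ?_⟩
      have hx : w i0 * (μ i0 - (τ + δ)) ^ 2 = w i0 * a ^ 2 + w i0 * δ * (2 * a + δ) := by
        have : μ i0 - (τ + δ) = -(a + δ) := by simp [ha]; ring
        rw [this]; ring
      have hstep : w i0 * δ * (2 * a + δ) ≤ σ2 * ε := by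
        have h1 : w i0 * δ * (2 * a + δ) ≤ w i0 * δ * (2 * a + 1) :=
          mul_le_mul_of_nonneg_left (by linarith) (mul_nonneg (hw i0) hδpos.le)
        have h2 : w i0 * δ * (2 * a + 1) ≤ δ * (w i0 * (2 * a + 1) + 1) := by
          nlinarith
        linarith
      have hgoal : w i0 * (μ i0 - (τ + δ)) ^ 2 / (2 * σ2)
          < w i0 * (μ i0 - τ) ^ 2 / (2 * σ2) + ε := by
        rw [hx]
        have hμτ : (μ i0 - τ) ^ 2 = a ^ 2 := by rw [ha]; ring
        rw [hμτ, div_lt_iff₀ (by linarith), add_mul, div_mul_cancel₀ _ (by linarith : (2:ℝ)*σ2 ≠ 0)]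
        nlinarith
      exact hgoal
  · exact le_csInf hne (by rintro y ⟨l, hl, rfl⟩; exact lowerA hσ2 hμ hw l hl)

end aux

section aux2
variable {K : ℕ} [NeZero K] {σ2 τ : ℝ} {μ : Fin K → ℝ}

lemma sup_eq (hσ2 : 0 < σ2) (hμ : ∀ i, μ i ≠ τ) :
    sSup {y | ∃ w ∈ stdSimplex ℝ (Fin K), y = ⨅ i, w i * (μ i - τ) ^ 2 / (2 * σ2)}
      = (∑ i, 2 * σ2 / (μ i - τ) ^ 2)⁻¹ := by
  have hd : ∀ i, 0 < (μ i - τ) ^ 2 := fun i => by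
    have h := sub_ne_zero_of_ne (hμ i); positivity
  set S : ℝ := ∑ i, 2 * σ2 / (μ i - τ) ^ 2 with hSdef
  have hSpos : 0 < S :=
    Finset.sum_pos (fun i _ => by have := hd i; positivity) Finset.univ_nonempty
  have hbound : ∀ w ∈ stdSimplex ℝ (Fin K),
      (⨅ i, w i * (μ i - τ) ^ 2 / (2 * σ2)) ≤ S⁻¹ := by
    intro w hw
    set m : ℝ := ⨅ i, w i * (μ i - τ) ^ 2 / (2 * σ2) with hm
    have hle : ∀ i, m ≤ w i * (μ i - τ) ^ 2 / (2 * σ2) := fun i =>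
      ciInf_le (Finite.bddBelow_range _) i
    have key : ∀ i, m * (2 * σ2 / (μ i - τ) ^ 2) ≤ w i := by
      intro i
      have h1 : m * (2 * σ2) ≤ w i * (μ i - τ) ^ 2 :=
        (le_div_iff₀ (by linarith)).mp (hle i)
      rw [← mul_div_assoc]
      exact (div_le_iff₀ (hd i)).mpr h1
    have hsum : m * S ≤ 1 := by
      have h2 : ∑ i, m * (2 * σ2 / (μ i - τ) ^ 2) ≤ ∑ i, w i :=
        Finset.sum_le_sum fun i _ => key i
      rw [← Finset.mul_sum, hw.2] at h2
      exact h2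
    have := (le_div_iff₀ hSpos).mpr hsum
    rwa [one_div] at this
  set w₀ : Fin K → ℝ := fun i => (2 * σ2 / (μ i - τ) ^ 2) / S with hw₀
  have hwmem : w₀ ∈ stdSimplex ℝ (Fin K) := by
    constructor
    · intro i
      have := hd i
      positivity
    · rw [← Finset.sum_div, div_self hSpos.ne']
  have hval : (⨅ i, w₀ i * (μ i - τ) ^ 2 / (2 * σ2)) = S⁻¹ := by
    have heq : ∀ i, w₀ i * (μ i - τ) ^ 2 / (2 * σ2) = S⁻¹ := by
      intro i
      have h1 := (hd i).ne'
      rw [hw₀]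
      field_simp
      exact div_self (sub_ne_zero_of_ne (hμ i))
    simp only [heq]
    exact ciInf_const
  apply le_antisymm
  · exact Real.sSup_le (by rintro y ⟨w, hw, rfl⟩; exact hbound w hw) (by positivity)
  · exact le_csSup ⟨S⁻¹, by rintro y ⟨w, hw, rfl⟩; exact hbound w hw⟩ ⟨w₀, hwmem, hval.symm⟩

end aux2

/-- Thresholding characteristic time:
`(T*(μ))⁻¹ = sup_{w ∈ Δ_K} min_i w_i (μ_i - τ)²/(2σ²) = (Σ_i 2σ²/(μ_i - τ)²)⁻¹`. -/
theorem stmt_13 (K : ℕ) [NeZero K] (σ2 τ : ℝ) (hσ2 : 0 < σ2)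
    (μ : Fin K → ℝ) (hμ : ∀ i, μ i ≠ τ) :
    Tinv K σ2 (AltTh K τ) μ =
        sSup {y | ∃ w ∈ stdSimplex ℝ (Fin K), y = ⨅ i, w i * (μ i - τ) ^ 2 / (2 * σ2)} ∧
      Tinv K σ2 (AltTh K τ) μ = (∑ i, 2 * σ2 / (μ i - τ) ^ 2)⁻¹ := by
  have hset : {x | ∃ w ∈ stdSimplex ℝ (Fin K), x =
        sInf {y | ∃ l ∈ AltTh K τ μ, y = ∑ i, w i * (μ i - l i) ^ 2 / (2 * σ2)}}
      = {y | ∃ w ∈ stdSimplex ℝ (Fin K), y = ⨅ i, w i * (μ i - τ) ^ 2 / (2 * σ2)} := by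
    ext x
    constructor
    · rintro ⟨w, hw, rfl⟩
      exact ⟨w, hw, inner_eq hσ2 hμ hw.1⟩
    · rintro ⟨w, hw, rfl⟩
      exact ⟨w, hw, (inner_eq hσ2 hμ hw.1).symm⟩
  have h1 : Tinv K σ2 (AltTh K τ) μ =
      sSup {y | ∃ w ∈ stdSimplex ℝ (Fin K), y = ⨅ i, w i * (μ i - τ) ^ 2 / (2 * σ2)} := by
    rw [Tinv, hset]
  exact ⟨h1, h1.trans (sup_eq hσ2 hμ)⟩
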